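/- arXiv:2110.10211 — 4 statements merged into one kernel-verified Lean document; each statement's English description precedes it below -/
import Mathlib

section
/- Let G be a locally compact Hausdorff topological group with a left Haar measure μ, S ⊆ G a measurable subset, w ∈ G, and ψ, f : G → ℝ measurable such that for every u ∈ G the function v ↦ ψ(v⁻¹u)·f(v) is μ-integrable. If S is invariant under left multiplication by w, i.e., w • S = S (equivalently, u ∈ S ⟺ w⁻¹u ∈ S for all u ∈ G), then the output-truncated group convolution is exactly w-equivariant: F_S(L_w f)(u) = L_w(F_S f)(u) for all u ∈ G. -/
open MeasureTheory Pointwise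

/-- If the output subset `S` is invariant under left multiplication by `w`, i.e.
`w • S = S`, then the output-truncated group convolution
`F_S(f)(u) = 1_S(u)·(ψ * f)(u)` is exactly `w`-equivariant:
`F_S(L_w f)(u) = L_w(F_S f)(u)` for all `u`. -/
theorem output_truncated_group_convolution_equivariant_of_invariant_subset
    {G : Type*} [Group G] [TopologicalSpace G] [IsTopologicalGroup G]
    [LocallyCompactSpace G] [T2Space G]
    [MeasurableSpace G] [BorelSpace G]
    (μ : Measure G) [μ.IsHaarMeasure]
    (S : Set G) (hS : MeasurableSet S)
    (w : G) (hSw : w • S = S)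
    (ψ f : G → ℝ) (hψ : Measurable ψ) (hf : Measurable f)
    (hint : ∀ u : G, Integrable (fun v => ψ (v⁻¹ * u) * f v) μ) :
    ∀ u : G,
      S.indicator (fun u' => ∫ v, ψ (v⁻¹ * u') * f (w⁻¹ * v) ∂μ) u
        = S.indicator (fun u' => ∫ v, ψ (v⁻¹ * u') * f v ∂μ) (w⁻¹ * u) := by
  intro u
  have hmem : u ∈ S ↔ w⁻¹ * u ∈ S := by
    conv_lhs => rw [← hSw]
    simp [Set.mem_smul_set_iff_inv_smul_mem]
  have hint' : (∫ v, ψ (v⁻¹ * u) * f (w⁻¹ * v) ∂μ)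
      = ∫ v, ψ (v⁻¹ * (w⁻¹ * u)) * f v ∂μ := by
    have := MeasureTheory.integral_mul_left_eq_self
      (f := fun v => ψ (v⁻¹ * (w⁻¹ * u)) * f v) (μ := μ) w⁻¹
    rw [← this]
    congr 1
    ext v
    simp [mul_assoc, mul_inv_rev]
  by_cases h : u ∈ S
  · rw [Set.indicator_of_mem h, Set.indicator_of_mem (hmem.mp h), hint']
  · rw [Set.indicator_of_notMem h, Set.indicator_of_notMem (fun hc => h (hmem.mpr hc))]
end

section
/- Let G be a locally compact Hausdorff topological group with a left Haar measure μ, S ⊆ G a measurable subset, w ∈ G, and ψ, f : G → ℝ measurable such that for every u ∈ G the function v ↦ 1_S(v)·ψ(v⁻¹u)·f(v) is μ-integrable. If the input subset S is invariant under left multiplication by w⁻¹, i.e., w⁻¹ • S = S, then the partial group convolution with input subset S is exactly w-equivariant: (ψ *_S L_w f)(u) = (ψ *_S f)(w⁻¹u) for all u ∈ G. -/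
open MeasureTheory Pointwise

/-- If the input subset `S` is invariant under left multiplication by `w⁻¹`, i.e.
`w⁻¹ • S = S`, then the partial group convolution with input subset `S` is exactly
`w`-equivariant: `(ψ *_S L_w f)(u) = (ψ *_S f)(w⁻¹u)` for all `u`. -/
theorem partial_group_convolution_equivariant_of_invariant_input_subset
    {G : Type*} [Group G] [TopologicalSpace G] [IsTopologicalGroup G]
    [LocallyCompactSpace G] [T2Space G]
    [MeasurableSpace G] [BorelSpace G]
    (μ : Measure G) [μ.IsHaarMeasure]
    (S : Set G) (hS : MeasurableSet S)
    (w : G) (hSw : w⁻¹ • S = S)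
    (ψ f : G → ℝ) (hψ : Measurable ψ) (hf : Measurable f)
    (hint : ∀ u : G, Integrable (S.indicator (fun v => ψ (v⁻¹ * u) * f v)) μ) :
    ∀ u : G,
      (∫ v in S, ψ (v⁻¹ * u) * f (w⁻¹ * v) ∂μ)
        = ∫ v in S, ψ (v⁻¹ * (w⁻¹ * u)) * f v ∂μ := by
  intro u
  rw [← integral_indicator hS, ← integral_indicator hS]
  rw [← integral_mul_left_eq_self (μ := μ)
    (S.indicator fun v => ψ (v⁻¹ * u) * f (w⁻¹ * v)) w]
  congr 1
  ext x
  by_cases hx : x ∈ S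
  · have hwx : w * x ∈ S := by
      have : x ∈ w⁻¹ • S := by rw [hSw]; exact hx
      rcases this with ⟨s, hs, rfl⟩
      simpa using hs
    simp [Set.indicator_of_mem hx, Set.indicator_of_mem hwx, mul_assoc, mul_inv_rev]
  · have hwx : w * x ∉ S := by
      intro h
      apply hx
      rw [← hSw]
      exact ⟨w * x, h, by simp⟩
    simp [Set.indicator_of_notMem hx, Set.indicator_of_notMem hwx]
end

section
/- Let G be a locally compact Hausdorff topological group with a left Haar measure μ, S ⊆ G a measurable subset, p : G → ℝ a function, w ∈ G, and ψ, f : G → ℝ measurable such that for every u ∈ G the function v ↦ 1_S(v)·ψ(v⁻¹u)·f(v) is μ-integrable. Define the p-weighted partial group convolution Φ(f)(u) = p(u)·∫_S ψ(v⁻¹u) f(v) dμ(v). If p is invariant under left translation by w, i.e., p(w⁻¹u) = p(u) for all u ∈ G, and the input subset satisfies w⁻¹ • S = S, then Φ is exactly w-equivariant: Φ(L_w f)(u) = Φ(f)(w⁻¹u) = L_w(Φ f)(u) for all u ∈ G. In particular, if p is constant on G and S = G, the operation is fully G-equivariant. -/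
open MeasureTheory Pointwise

/-- For the `p`-weighted partial group convolution
`Φ(f)(u) = p(u)·∫_S ψ(v⁻¹u) f(v) dμ(v)` (the paper's Eq. 7), if the density `p`
is invariant under left translation by `w` (`p(w⁻¹u) = p(u)` for all `u`) and the
input subset satisfies `w⁻¹ • S = S`, then `Φ` is exactly `w`-equivariant:
`Φ(L_w f)(u) = Φ(f)(w⁻¹u) = L_w(Φ f)(u)` for all `u`. In particular, if `p` is
constant on `G` and `S = G`, the operation is fully `G`-equivariant. -/
theorem weighted_partial_group_convolution_equivariant
    {G : Type*} [Group G] [TopologicalSpace G] [IsTopologicalGroup G]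
    [LocallyCompactSpace G] [T2Space G]
    [MeasurableSpace G] [BorelSpace G]
    (μ : Measure G) [μ.IsHaarMeasure]
    (S : Set G) (hS : MeasurableSet S)
    (p : G → ℝ) (w : G)
    (ψ f : G → ℝ) (hψ : Measurable ψ) (hf : Measurable f)
    (hint : ∀ u : G, Integrable (S.indicator (fun v => ψ (v⁻¹ * u) * f v)) μ)
    (hp : ∀ u : G, p (w⁻¹ * u) = p u) (hSw : w⁻¹ • S = S) :
    ∀ u : G,
      p u * (∫ v in S, ψ (v⁻¹ * u) * f (w⁻¹ * v) ∂μ)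
        = p (w⁻¹ * u) * ∫ v in S, ψ (v⁻¹ * (w⁻¹ * u)) * f v ∂μ := by
  intro u
  rw [hp u]
  congr 1
  rw [← integral_indicator hS, ← integral_indicator hS]
  rw [← MeasureTheory.integral_mul_left_eq_self _ w]
  congr 1
  ext x
  have hmem : w * x ∈ S ↔ x ∈ S := by
    constructor
    · intro h
      have : w⁻¹ • (w * x) ∈ w⁻¹ • S := Set.smul_mem_smul_set h
      simpa [hSw, smul_eq_mul, mul_assoc] using this
    · intro h
      have : x ∈ w⁻¹ • S := hSw.symm ▸ h
      obtain ⟨y, hy, hxy⟩ := this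
      simpa [smul_eq_mul, ← hxy, mul_assoc] using hy
  by_cases hx : x ∈ S
  · simp [Set.indicator_of_mem hx, Set.indicator_of_mem (hmem.mpr hx), mul_assoc]
  · simp [Set.indicator_of_notMem hx, Set.indicator_of_notMem (fun h => hx (hmem.mp h))]
end

section
/- Let G be a compact Hausdorff topological group with its Haar probability measure μ, let ψ, f : G → ℝ be measurable, let n be a positive natural number, and let u, w ∈ G. Then the Monte Carlo approximation of the group convolution is equivariant in distribution when the sample points are drawn i.i.d. from μ: the pushforward of the product measure μ^n on G^n under the map (v_1, …, v_n) ↦ (1/n)·Σ_{j=1}^n ψ(v_j⁻¹ u)·f(w⁻¹ v_j) equals the pushforward of μ^n under the map (v_1, …, v_n) ↦ (1/n)·Σ_{j=1}^n ψ(v_j⁻¹ (w⁻¹u))·f(v_j). That is, (ψ *̂ L_w f)(u) and (ψ *̂ f)(w⁻¹u) have the same distribution. -/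
open MeasureTheory

/-- The Monte Carlo approximation of the group convolution on a compact Hausdorff
topological group with its Haar probability measure is equivariant in
distribution: with sample points drawn i.i.d. from the Haar measure,
`(ψ *̂ L_w f)(u)` and `(ψ *̂ f)(w⁻¹u)` have the same distribution, i.e. the
pushforwards of the product measure `μ^n` under the two Monte Carlo sums agree. -/
theorem monte_carlo_group_convolution_equivariant_in_distribution
    {G : Type*} [Group G] [TopologicalSpace G] [IsTopologicalGroup G]
    [CompactSpace G] [T2Space G]
    [MeasurableSpace G] [BorelSpace G]
    (μ : Measure G) [μ.IsHaarMeasure] [IsProbabilityMeasure μ]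
    (ψ f : G → ℝ) (hψ : Measurable ψ) (hf : Measurable f)
    (n : ℕ) (hn : 0 < n) (u w : G) :
    Measure.map
        (fun v : Fin n → G => (1 / (n : ℝ)) * ∑ j, ψ ((v j)⁻¹ * u) * f (w⁻¹ * v j))
        (Measure.pi fun _ : Fin n => μ)
      = Measure.map
          (fun v : Fin n → G => (1 / (n : ℝ)) * ∑ j, ψ ((v j)⁻¹ * (w⁻¹ * u)) * f (v j))
          (Measure.pi fun _ : Fin n => μ) := by
  have hT : MeasurePreserving (fun v : Fin n → G => fun j => w⁻¹ * v j)
      (Measure.pi fun _ : Fin n => μ) (Measure.pi fun _ : Fin n => μ) :=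
    measurePreserving_pi _ _ (fun _ => measurePreserving_mul_left μ w⁻¹)
  have hF₂ : Measurable
      (fun v : Fin n → G => (1 / (n : ℝ)) * ∑ j, ψ ((v j)⁻¹ * (w⁻¹ * u)) * f (v j)) := by
    apply Measurable.const_mul
    exact Finset.measurable_sum _ fun j _ =>
      ((hψ.comp (((measurable_pi_apply j).inv).mul_const _)).mul
        (hf.comp (measurable_pi_apply j)))
  calc Measure.map
        (fun v : Fin n → G => (1 / (n : ℝ)) * ∑ j, ψ ((v j)⁻¹ * u) * f (w⁻¹ * v j))
        (Measure.pi fun _ : Fin n => μ)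
      = Measure.map
          ((fun v : Fin n → G => (1 / (n : ℝ)) * ∑ j, ψ ((v j)⁻¹ * (w⁻¹ * u)) * f (v j))
            ∘ (fun v : Fin n → G => fun j => w⁻¹ * v j))
          (Measure.pi fun _ : Fin n => μ) := by
        congr 1
        funext v
        simp only [Function.comp]
        congr 1
        apply Finset.sum_congr rfl
        intro j _
        congr 2
        group
    _ = _ := by
        rw [← Measure.map_map hF₂ hT.measurable, hT.map_eq]
end
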